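/- Let G be a finite directed graph and F ⊆ V with |F| ≤ f. Suppose there is a partition (A,B) of V with A−F and B−F nonempty such that B does not (f+1)-propagate to A−F avoiding F (i.e., some vertex t ∈ A−F has at most f pairwise internally-disjoint paths from B excluding F). Then there exists a partition (A',B') of V with A' ⊆ A, B ⊆ B', both A'−F and B'−F nonempty, such that the in-neighborhood of A'−F contained in B' has size at most f. -/

import Mathlib

open Set

variable {V : Type*}

/-- A (directed) path: nonempty list of distinct vertices with consecutive edges. -/
def DiPath (E : V → V → Prop) (p : List V) : Prop :=
  p ≠ [] ∧ p.Nodup ∧ p.Chain' E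

/-- A path excludes `F` if none of its internal vertices lies in `F`. -/
def Excludes (F : Set V) (p : List V) : Prop :=
  ∀ x ∈ p.tail.dropLast, x ∉ F

/-- A path from (a vertex of) `A` to `v`. -/
def PathFromTo (E : V → V → Prop) (A : Set V) (v : V) (p : List V) : Prop :=
  DiPath E p ∧ (∃ a ∈ A, p.head? = some a) ∧ p.getLast? = some v

/-- There exist `n` pairwise internally-disjoint `A`-`v` paths excluding `F`
(sharing only the terminal `v`). -/
def DisjPaths (E : V → V → Prop) (F A : Set V) (v : V) (n : ℕ) : Prop :=
  ∃ P : Fin n → List V,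
    (∀ i, PathFromTo E A v (P i) ∧ Excludes F (P i)) ∧
    (∀ i j, i ≠ j → ∀ x, x ∈ P i → x ∈ P j → x = v)

/-- `A` (f+1)-propagates to every vertex of `B` avoiding `F`. -/
def Propagates (E : V → V → Prop) (f : ℕ) (F A B : Set V) : Prop :=
  ∀ v ∈ B, DisjPaths E F A v (f + 1)

/-- Condition SC with parameter `F`. -/
def CondSC (E : V → V → Prop) (f : ℕ) (F : Set V) : Prop :=
  ∀ A B : Set V, A ∪ B = Set.univ → A ∩ B = ∅ →
    (A \ F).Nonempty → (B \ F).Nonempty →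
    Propagates E f F A (B \ F) ∨ Propagates E f F B (A \ F)

/-- Reachability within the vertex set `W`. -/
def ReachIn (E : V → V → Prop) (W : Set V) : V → V → Prop :=
  Relation.ReflTransGen (fun a b => a ∈ W ∧ b ∈ W ∧ E a b)

/-- `S` is a (maximal) strongly connected component of the induced subgraph on `W`. -/
def IsSCCIn (E : V → V → Prop) (W S : Set V) : Prop :=
  S.Nonempty ∧ S ⊆ W ∧ (∀ u ∈ S, ∀ v ∈ S, ReachIn E W u v) ∧
  ∀ T, S ⊆ T → T ⊆ W → (∀ u ∈ T, ∀ v ∈ T, ReachIn E W u v) → T = S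

/-- `S` is a source component of `G − F`: an SCC of the induced subgraph on `V − F`
receiving no edge from a vertex of `V − F` outside `S`. -/
def IsSourceComponent (E : V → V → Prop) (F S : Set V) : Prop :=
  IsSCCIn E (Set.univ \ F) S ∧ ∀ u, u ∉ F → u ∉ S → ∀ s ∈ S, ¬ E u s

/-- In-neighborhood of `T` contained in `B`. -/
def inNbr (E : V → V → Prop) (B T : Set V) : Set V :=
  {u ∈ B | ∃ v ∈ T, E u v}

/-- `N(F→S)`: vertices of `F` with an edge into `S`. -/
def NFS (E : V → V → Prop) (F S : Set V) : Set V :=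
  {w ∈ F | ∃ s ∈ S, E w s}

/-- Edge relation of the subgraph induced on `U`. -/
def inducedE (E : V → V → Prop) (U : Set V) : V → V → Prop :=
  fun a b => a ∈ U ∧ b ∈ U ∧ E a b

/-- Condition NC with parameter `F`. -/
def CondNC (E : V → V → Prop) (f : ℕ) (F : Set V) : Prop :=
  ∀ L C R : Set V, L ∪ C ∪ R = Set.univ →
    L ∩ C = ∅ → L ∩ R = ∅ → C ∩ R = ∅ →
    (L \ F).Nonempty → (R \ F).Nonempty →
    f < (inNbr E (R ∪ C) (L \ F)).ncard ∨ f < (inNbr E (L ∪ C) (R \ F)).ncard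


namespace MAux

open List

variable {V : Type*}

def edges : List V → List (V × V)
  | [] => []
  | [_] => []
  | a :: b :: l => (a, b) :: edges (b :: l)

@[simp] lemma edges_nil : edges ([] : List V) = [] := rfl
@[simp] lemma edges_singleton (a : V) : edges [a] = [] := rfl
@[simp] lemma edges_cons_cons (a b : V) (l : List V) :
    edges (a :: b :: l) = (a, b) :: edges (b :: l) := rfl

lemma chain'_iff_edges {R : V → V → Prop} :
    ∀ {p : List V}, p.Chain' R ↔ ∀ q ∈ edges p, R q.1 q.2
  | [] => by simp [List.Chain']
  | [a] => by simp [List.Chain']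
  | a :: b :: l => by
    rw [List.Chain', List.isChain_cons_cons, edges_cons_cons]
    constructor
    · rintro ⟨h1, h2⟩ q hq
      rcases List.mem_cons.1 hq with rfl | hq
      · exact h1
      · exact (chain'_iff_edges.1 h2) q hq
    · intro h
      exact ⟨h _ (List.mem_cons_self),
        chain'_iff_edges.2 fun q hq => h q (List.mem_cons_of_mem _ hq)⟩

lemma mem_edges : ∀ {p : List V} {a b : V}, (a, b) ∈ edges p → a ∈ p.dropLast ∧ b ∈ p.tail
  | [], a, b, h => by simp at h
  | [x], a, b, h => by simp at h
  | x :: y :: l, a, b, h => by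
    rw [edges_cons_cons, List.mem_cons] at h
    rcases h with h | h
    · obtain ⟨rfl, rfl⟩ : a = x ∧ b = y :=
        ⟨congrArg Prod.fst h, congrArg Prod.snd h⟩
      exact ⟨by rw [List.dropLast_cons₂]; exact List.mem_cons_self, List.mem_cons_self⟩
    · have h2 := mem_edges h
      exact ⟨by rw [List.dropLast_cons₂]; exact List.mem_cons_of_mem _ h2.1,
        List.mem_cons_of_mem _ h2.2⟩

lemma ne_of_mem_edges : ∀ {p : List V} {a b : V}, p.Nodup → (a, b) ∈ edges p → a ≠ b
  | [], a, b, _, h => by simp at h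
  | [x], a, b, _, h => by simp at h
  | x :: y :: l, a, b, hnd, h => by
    rcases List.mem_cons.1 h with h | h
    · obtain ⟨rfl, rfl⟩ : a = x ∧ b = y :=
        ⟨congrArg Prod.fst h, congrArg Prod.snd h⟩
      intro rfl'
      exact (List.nodup_cons.1 hnd).1 (rfl' ▸ List.mem_cons_self)
    · exact ne_of_mem_edges (List.nodup_cons.1 hnd).2 h

lemma edges_append_left : ∀ (q r : List V), edges q ⊆ edges (q ++ r)
  | [], r => by simp
  | [a], r => by simp
  | a :: b :: l, r => by
    rw [List.cons_append, List.cons_append, edges_cons_cons]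
    rw [show edges (a :: b :: (l ++ r)) = (a, b) :: edges (b :: (l ++ r)) from rfl]
    exact List.cons_subset_cons _ (by simpa using edges_append_left (b :: l) r)

lemma edges_cons_subset (a : V) (l : List V) : edges l ⊆ edges (a :: l) := by
  cases l with
  | nil => simp
  | cons b l =>
    rw [edges_cons_cons]
    exact List.subset_cons_self _ _

lemma edges_append_right : ∀ (q r : List V), edges r ⊆ edges (q ++ r)
  | [], r => by simp
  | a :: q, r => List.Subset.trans (edges_append_right q r) (edges_cons_subset a _)

lemma edges_prefix {q p : List V} (h : q <+: p) : edges q ⊆ edges p := by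
  obtain ⟨r, rfl⟩ := h; exact edges_append_left _ _

lemma edges_suffix {q p : List V} (h : q <:+ p) : edges q ⊆ edges p := by
  obtain ⟨r, rfl⟩ := h; exact edges_append_right _ _

lemma head?_of_prefix {q p : List V} (h : q <+: p) (hq : q ≠ []) : p.head? = q.head? := by
  obtain ⟨r, rfl⟩ := h
  cases q with
  | nil => exact absurd rfl hq
  | cons a q => simp

lemma getLast?_of_suffix {q p : List V} (h : q <:+ p) (hq : q ≠ []) :
    p.getLast? = q.getLast? := by
  obtain ⟨l, rfl⟩ := h
  exact List.getLast?_append_of_ne_nil _ hq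

lemma first_hit (S : Set V) :
    ∀ (p : List V), (∃ s ∈ S, s ∈ p) →
      ∃ q : List V, q <+: p ∧ q ≠ [] ∧ (∃ s ∈ S, q.getLast? = some s) ∧
        ∀ x ∈ q.dropLast, x ∉ S := by
  intro p
  induction p with
  | nil => rintro ⟨s, _, h⟩; simp at h
  | cons a p ih =>
    intro h
    by_cases ha : a ∈ S
    · exact ⟨[a], ⟨p, rfl⟩, by simp, ⟨a, ha, rfl⟩, by simp⟩
    · have h' : ∃ s ∈ S, s ∈ p := by
        rcases h with ⟨s, hs, hm⟩
        rcases List.mem_cons.1 hm with rfl | hm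
        · exact absurd hs ha
        · exact ⟨s, hs, hm⟩
      rcases ih h' with ⟨q, ⟨r, hr⟩, hne, hlast, hdrop⟩
      refine ⟨a :: q, ⟨r, by rw [List.cons_append, hr]⟩, by simp, ?_, ?_⟩
      · rcases hlast with ⟨s, hs, hls⟩
        refine ⟨s, hs, ?_⟩
        cases q with
        | nil => exact absurd rfl hne
        | cons b q => rw [List.getLast?_cons_cons]; exact hls
      · intro x hx
        cases q with
        | nil => exact absurd rfl hne
        | cons b q =>
          rw [List.dropLast_cons₂] at hx
          rcases List.mem_cons.1 hx with rfl | hx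
          · exact ha
          · exact hdrop x hx

lemma last_hit (S : Set V) (p : List V) (h : ∃ s ∈ S, s ∈ p) :
    ∃ r : List V, r <:+ p ∧ r ≠ [] ∧ (∃ s ∈ S, r.head? = some s) ∧
      ∀ x ∈ r.tail, x ∉ S := by
  rcases first_hit S p.reverse (by rcases h with ⟨s, hs, hm⟩; exact ⟨s, hs, by simpa using hm⟩)
    with ⟨q, hpre, hne, hlast, hdrop⟩
  refine ⟨q.reverse, ?_, by simpa using hne, ?_, ?_⟩
  · rw [← List.reverse_reverse p]
    exact List.reverse_suffix.2 hpre
  · rcases hlast with ⟨s, hs, hls⟩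
    exact ⟨s, hs, by rwa [List.head?_reverse]⟩
  · intro x hx
    apply hdrop x
    rwa [List.tail_reverse, List.mem_reverse] at hx

lemma suffix_from_mem {a : V} {q : List V} (h : a ∈ q) :
    ∃ r : List V, r <:+ q ∧ r.head? = some a := by
  rcases last_hit {a} q ⟨a, rfl, h⟩ with ⟨r, hsuf, hne, ⟨s, hs, hh⟩, -⟩
  exact ⟨r, hsuf, by rwa [Set.mem_singleton_iff.1 hs] at hh⟩

lemma exists_nodup_path {R : V → V → Prop} :
    ∀ (p : List V), p.Chain' R → p ≠ [] →
      ∃ q : List V, q ≠ [] ∧ q.Nodup ∧ q.Chain' R ∧ q.head? = p.head? ∧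
        q.getLast? = p.getLast? ∧ ∀ x ∈ q, x ∈ p := by
  intro p
  induction p with
  | nil => intro _ h; exact absurd rfl h
  | cons a p ih =>
    intro hc _
    cases p with
    | nil => exact ⟨[a], by simp, by simp, by simp [List.Chain'], rfl, rfl, by simp⟩
    | cons b p' =>
      have hc' : (b :: p').Chain' R := hc.tail
      rcases ih hc' (by simp) with ⟨q, hne, hnd, hch, hh, hl, hsub⟩
      by_cases haq : a ∈ q
      · rcases suffix_from_mem haq with ⟨r, hsuf, hhr⟩
        have hrne : r ≠ [] := by intro h; rw [h] at hhr; simp at hhr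
        refine ⟨r, hrne, hnd.sublist hsuf.sublist, hch.suffix hsuf, by rw [hhr]; simp, ?_, ?_⟩
        · rw [← getLast?_of_suffix hsuf hrne, hl, List.getLast?_cons_cons]
        · intro x hx
          exact List.mem_cons_of_mem _ (hsub x (hsuf.subset hx))
      · refine ⟨a :: q, by simp, List.nodup_cons.2 ⟨haq, hnd⟩, ?_, by simp, ?_, ?_⟩
        · rw [List.Chain', List.isChain_cons]
          refine ⟨?_, hch⟩
          intro y hy
          have hq : q.head? = some b := by rw [hh]; simp
          rw [hq] at hy
          cases hy
          exact (List.isChain_cons_cons.1 hc).1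
        · rw [List.getLast?_cons_cons]
          cases q with
          | nil => exact absurd rfl hne
          | cons c q' =>
            rw [show ((a :: c :: q').getLast? = (c :: q').getLast?) from
              List.getLast?_cons_cons ..]
            exact hl
        · intro x hx
          rcases List.mem_cons.1 hx with rfl | hx
          · exact List.mem_cons_self
          · exact List.mem_cons_of_mem _ (hsub x hx)

lemma mem_of_getLast?_eq {p : List V} {a : V} (h : p.getLast? = some a) : a ∈ p := by
  cases p with
  | nil => simp at h
  | cons b q =>
    rw [List.getLast?_eq_getLast (l := b :: q) (by simp)] at h
    exact (Option.some_inj.1 h) ▸ List.getLast_mem _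

lemma mem_of_head?_eq {p : List V} {a : V} (h : p.head? = some a) : a ∈ p := by
  cases p with
  | nil => simp at h
  | cons b q => simp at h; exact h ▸ List.mem_cons_self

lemma head?_eq_or_mem_tail {p : List V} {x : V} (h : x ∈ p) :
    p.head? = some x ∨ x ∈ p.tail := by
  cases p with
  | nil => simp at h
  | cons a q =>
    rcases List.mem_cons.1 h with rfl | h
    · exact Or.inl rfl
    · exact Or.inr h

lemma mem_dropLast_or_getLast? {p : List V} {x : V} (h : x ∈ p) :
    x ∈ p.dropLast ∨ p.getLast? = some x := by
  have hne : p ≠ [] := by rintro rfl; simp at h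
  conv at h => rw [← List.dropLast_append_getLast hne]
  rcases List.mem_append.1 h with h | h
  · exact Or.inl h
  · right
    rw [List.getLast?_eq_getLast hne]
    have : x = p.getLast hne := by simpa using h
    rw [this]

lemma head?_not_mem_tail {p : List V} {a : V} (hnd : p.Nodup) (h : p.head? = some a) :
    a ∉ p.tail := by
  cases p with
  | nil => simp
  | cons b q =>
    simp only [List.head?_cons, Option.some_inj] at h
    subst h
    exact (List.nodup_cons.1 hnd).1

lemma eq_of_prefix_getLast_mem {p q : List V} (hnd : p.Nodup) (hpre : q <+: p)
    {b : V} (hb : p.getLast? = some b) (hbq : b ∈ q) : q = p := by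
  obtain ⟨r, rfl⟩ := hpre
  cases r with
  | nil => simp
  | cons c r =>
    rw [List.getLast?_append_of_ne_nil _ (by simp)] at hb
    have hbr : b ∈ c :: r := mem_of_getLast?_eq hb
    exact absurd hbr (fun h => (List.nodup_append.1 hnd).2.2 _ hbq _ h rfl)

lemma eq_of_suffix_head_mem {p r : List V} (hnd : p.Nodup) (hsuf : r <:+ p)
    {b : V} (hb : p.head? = some b) (hbr : b ∈ r) : r = p := by
  obtain ⟨q, rfl⟩ := hsuf
  cases q with
  | nil => simp
  | cons c q =>
    have hbc : b = c := by
      simp only [List.cons_append, List.head?_cons, Option.some_inj] at hb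
      exact hb.symm
    subst hbc
    exact absurd hbr (fun h => (List.nodup_append.1 hnd).2.2 _ List.mem_cons_self _ h rfl)

lemma mem_tail_edges : ∀ {p : List V} {x : V}, x ∈ p.tail → ∃ a, (a, x) ∈ edges p
  | [], x, h => by simp at h
  | [c], x, h => by simp at h
  | c :: d :: l, x, h => by
    rcases List.mem_cons.1 h with rfl | h
    · exact ⟨c, List.mem_cons_self⟩
    · obtain ⟨a, ha⟩ := mem_tail_edges (p := d :: l) h
      exact ⟨a, List.mem_cons_of_mem _ ha⟩

lemma eq_singleton_of_edges_nil : ∀ {p : List V}, p ≠ [] → edges p = [] → ∃ a, p = [a]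
  | [a], _, _ => ⟨a, rfl⟩
  | [], h, _ => absurd rfl h
  | a :: b :: l, _, h => by simp [edges] at h

lemma glue_path {R : V → V → Prop} {q r : List V} (hq : q.Chain' R) (hr : r.Chain' R)
    (hqne : q ≠ []) (hrne : r ≠ []) (hlink : q.getLast? = r.head?) :
    (q ++ r.tail).Chain' R ∧ (q ++ r.tail).head? = q.head? ∧
      (q ++ r.tail).getLast? = r.getLast? := by
  cases r with
  | nil => exact absurd rfl hrne
  | cons c r' =>
    refine ⟨?_, ?_, ?_⟩
    · refine List.isChain_append.2 ⟨hq, hr.tail, ?_⟩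
      intro x hx y hy
      have hxc : x = c := by
        rw [hlink] at hx
        simp only [List.head?_cons, Option.mem_def, Option.some_inj] at hx
        exact hx.symm
      subst hxc
      exact (List.isChain_cons.1 hr).1 y hy
    · cases q with
      | nil => exact absurd rfl hqne
      | cons a q' => simp
    · cases r' with
      | nil =>
        simp only [List.tail_cons, List.append_nil]
        rw [hlink]; simp
      | cons d r'' =>
        rw [List.tail_cons, List.getLast?_append_of_ne_nil _ (by simp),
          List.getLast?_cons_cons]

def Pth (ε : Finset (V × V)) (X Y : Set V) (p : List V) : Prop :=
  p.Nodup ∧ p.Chain' (fun a b => (a, b) ∈ ε) ∧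
    (∃ a ∈ X, p.head? = some a) ∧ (∃ b ∈ Y, p.getLast? = some b)

def Sep (ε : Finset (V × V)) (X Y S : Set V) : Prop :=
  ∀ p, Pth ε X Y p → ∃ s ∈ S, s ∈ p

lemma Pth.ne_nil {ε : Finset (V × V)} {X Y : Set V} {p : List V} (h : Pth ε X Y p) :
    p ≠ [] := by
  rcases h.2.2.1 with ⟨a, -, ha⟩
  rintro rfl; simp at ha

lemma Pth.mono {ε ε' : Finset (V × V)} (hsub : ε ⊆ ε') {X Y : Set V} {p : List V}
    (h : Pth ε X Y p) : Pth ε' X Y p :=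
  ⟨h.1, h.2.1.imp (fun _ _ hab => hsub hab), h.2.2⟩

lemma menger_empty [Fintype V] (X Y : Set V) (k : ℕ)
    (h : ∀ S : Set V, Sep (∅ : Finset (V × V)) X Y S → k ≤ S.ncard) :
    ∃ P : Fin k → List V, (∀ i, Pth (∅ : Finset (V × V)) X Y (P i)) ∧
      ∀ i j, i ≠ j → ∀ x, x ∈ P i → x ∉ P j := by
  classical
  have hsep : Sep (∅ : Finset (V × V)) X Y (X ∩ Y) := by
    intro p hp
    obtain ⟨hnd, hch, ⟨a, haX, hha⟩, ⟨b, hbY, hlb⟩⟩ := hp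
    have hedges : edges p = [] := by
      rw [List.eq_nil_iff_forall_not_mem]
      intro q hq
      exact absurd (chain'_iff_edges.1 hch q hq) (by simp)
    obtain ⟨c, rfl⟩ := eq_singleton_of_edges_nil (by rintro rfl; simp at hha) hedges
    have hac : a = c := by simpa using hha.symm
    have hbc : b = c := by simpa using hlb.symm
    exact ⟨c, ⟨hac ▸ haX, hbc ▸ hbY⟩, List.mem_singleton_self _⟩
  have hk := h _ hsep
  rw [Set.ncard_eq_toFinset_card _ (Set.toFinite _)] at hk
  obtain ⟨T, hTsub, hTcard⟩ := Finset.exists_subset_card_eq hk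
  have hcard : Fintype.card ↥T = k := by rw [Fintype.card_coe]; exact hTcard
  let eqv : ↥T ≃ Fin k := Fintype.equivFinOfCardEq hcard
  have hmem : ∀ i : Fin k, ((eqv.symm i : ↥T) : V) ∈ X ∩ Y := by
    intro i
    have := hTsub (eqv.symm i).2
    rwa [Set.Finite.mem_toFinset] at this
  refine ⟨fun i => [((eqv.symm i : ↥T) : V)], ?_, ?_⟩
  · intro i
    exact ⟨by simp, by simp [List.Chain'], ⟨_, (hmem i).1, rfl⟩, ⟨_, (hmem i).2, rfl⟩⟩
  · intro i j hij x hxi hxj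
    have hx1 : x = ((eqv.symm i : ↥T) : V) := by simpa using hxi
    have hx2 : x = ((eqv.symm j : ↥T) : V) := by simpa using hxj
    apply hij
    have : (eqv.symm i : ↥T) = (eqv.symm j : ↥T) := Subtype.ext (hx1 ▸ hx2)
    exact eqv.symm.injective this

end MAux

namespace MAux

variable {V : Type*}

lemma head?_append_of_ne_nil' {q r : List V} (hq : q ≠ []) : (q ++ r).head? = q.head? := by
  cases q with
  | nil => exact absurd rfl hq
  | cons a q => simp

theorem menger [Fintype V] :
    ∀ (n : ℕ) (ε : Finset (V × V)), ε.card ≤ n → ∀ (X Y : Set V) (k : ℕ),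
      (∀ S : Set V, Sep ε X Y S → k ≤ S.ncard) →
      ∃ P : Fin k → List V, (∀ i, Pth ε X Y (P i)) ∧
        ∀ i j, i ≠ j → ∀ x, x ∈ P i → x ∉ P j := by
  classical
  intro n
  induction n with
  | zero =>
    intro ε hε X Y k h
    have hemp : ε = ∅ := Finset.card_eq_zero.1 (Nat.le_zero.1 hε)
    subst hemp
    exact menger_empty X Y k h
  | succ n ih =>
    intro ε hε X Y k h
    rcases eq_or_ne ε ∅ with rfl | hεne
    · exact menger_empty X Y k h
    obtain ⟨⟨u, v⟩, he⟩ := Finset.nonempty_iff_ne_empty.2 hεne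
    set ε' : Finset (V × V) := ε.erase (u, v) with hε'def
    have hε'card : ε'.card ≤ n := by
      have h1 : ε'.card = ε.card - 1 := by rw [hε'def]; exact Finset.card_erase_of_mem he
      have h2 : 1 ≤ ε.card := Finset.card_pos.2 ⟨_, he⟩
      omega
    have hε'sub : ε' ⊆ ε := Finset.erase_subset _ _
    rcases eq_or_ne u v with rfl | huv
    · -- loop edge (u,u): same path system
      have hPth : ∀ p, Pth ε X Y p → Pth ε' X Y p := by
        intro p hp
        refine ⟨hp.1, ?_, hp.2.2⟩
        rw [chain'_iff_edges]
        rintro ⟨a, b⟩ hq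
        have h1 : (a, b) ∈ ε := chain'_iff_edges.1 hp.2.1 _ hq
        refine Finset.mem_erase.2 ⟨?_, h1⟩
        intro hab
        have hne := ne_of_mem_edges hp.1 hq
        apply hne
        have : a = u ∧ b = u := ⟨congrArg Prod.fst hab, congrArg Prod.snd hab⟩
        rw [this.1, this.2]
      have hsep' : ∀ S, Sep ε' X Y S → k ≤ S.ncard :=
        fun S hS => h S (fun p hp => hS p (hPth p hp))
      obtain ⟨P, hP, hd⟩ := ih ε' hε'card X Y k hsep'
      exact ⟨P, fun i => (hP i).mono hε'sub, hd⟩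
    by_cases hsepcase : ∀ S : Set V, Sep ε' X Y S → k ≤ S.ncard
    · obtain ⟨P, hP, hd⟩ := ih ε' hε'card X Y k hsepcase
      exact ⟨P, fun i => (hP i).mono hε'sub, hd⟩
    push_neg at hsepcase
    obtain ⟨S, hS, hSlt⟩ := hsepcase
    set Su : Set V := S ∪ {u} with hSudef
    set Sv : Set V := S ∪ {v} with hSvdef
    -- key decomposition: prefix of any ε-path up to first Su-hit is an ε'-path to Su
    have key_left : ∀ p, Pth ε X Y p → ∃ q, q <+: p ∧ Pth ε' X Su q ∧
        (∃ s ∈ Su, q.getLast? = some s) ∧ ∀ x ∈ q.dropLast, x ∉ Su := by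
      intro p hp
      have hhit : ∃ s ∈ Su, s ∈ p := by
        by_cases hu : (u, v) ∈ edges p
        · exact ⟨u, Or.inr rfl, List.dropLast_subset _ (mem_edges hu).1⟩
        · have hch' : p.Chain' (fun a b => (a, b) ∈ ε') := by
            rw [chain'_iff_edges]
            rintro ⟨a, b⟩ hq
            refine Finset.mem_erase.2 ⟨?_, chain'_iff_edges.1 hp.2.1 _ hq⟩
            intro hab
            exact hu (hab ▸ hq)
          obtain ⟨s, hsS, hsp⟩ := hS p ⟨hp.1, hch', hp.2.2⟩
          exact ⟨s, Or.inl hsS, hsp⟩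
      obtain ⟨q, hqpre, hqne, hqlast, hqdrop⟩ := first_hit Su p hhit
      refine ⟨q, hqpre, ⟨hp.1.sublist hqpre.sublist, ?_, ?_, hqlast⟩, hqlast, hqdrop⟩
      · rw [chain'_iff_edges]
        rintro ⟨a, b⟩ hq
        have heε : (a, b) ∈ ε := chain'_iff_edges.1 (hp.2.1.prefix hqpre) _ hq
        refine Finset.mem_erase.2 ⟨?_, heε⟩
        intro hab
        have hmem := (mem_edges hq).1
        have hau : a = u := congrArg Prod.fst hab
        exact hqdrop a hmem (Or.inr (by rw [hau]; rfl))
      · obtain ⟨a, haX, hha⟩ := hp.2.2.1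
        exact ⟨a, haX, by rw [← head?_of_prefix hqpre hqne]; exact hha⟩
    have sep_Su : Sep ε X Y Su := by
      intro p hp
      obtain ⟨q, hqpre, -, ⟨s, hsSu, hslast⟩, -⟩ := key_left p hp
      exact ⟨s, hsSu, hqpre.subset (mem_of_getLast?_eq hslast)⟩
    have sep_left : ∀ T : Set V, Sep ε' X Su T → k ≤ T.ncard := by
      intro T hT
      apply h
      intro p hp
      obtain ⟨q, hqpre, hq, -, -⟩ := key_left p hp
      obtain ⟨s, hsT, hsq⟩ := hT q hq
      exact ⟨s, hsT, hqpre.subset hsq⟩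
    -- right key
    have key_right : ∀ p, Pth ε X Y p → ∃ r, r <:+ p ∧ Pth ε' Sv Y r ∧
        (∃ s ∈ Sv, r.head? = some s) ∧ ∀ x ∈ r.tail, x ∉ Sv := by
      intro p hp
      have hhit : ∃ s ∈ Sv, s ∈ p := by
        by_cases hu : (u, v) ∈ edges p
        · exact ⟨v, Or.inr rfl, List.tail_subset _ (mem_edges hu).2⟩
        · have hch' : p.Chain' (fun a b => (a, b) ∈ ε') := by
            rw [chain'_iff_edges]
            rintro ⟨a, b⟩ hq
            refine Finset.mem_erase.2 ⟨?_, chain'_iff_edges.1 hp.2.1 _ hq⟩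
            intro hab
            exact hu (hab ▸ hq)
          obtain ⟨s, hsS, hsp⟩ := hS p ⟨hp.1, hch', hp.2.2⟩
          exact ⟨s, Or.inl hsS, hsp⟩
      obtain ⟨r, hrsuf, hrne, hrhead, hrtail⟩ := last_hit Sv p hhit
      refine ⟨r, hrsuf, ⟨hp.1.sublist hrsuf.sublist, ?_, hrhead, ?_⟩, hrhead, hrtail⟩
      · rw [chain'_iff_edges]
        rintro ⟨a, b⟩ hq
        have heε : (a, b) ∈ ε := chain'_iff_edges.1 (hp.2.1.suffix hrsuf) _ hq
        refine Finset.mem_erase.2 ⟨?_, heε⟩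
        intro hab
        have hmem := (mem_edges hq).2
        have hbv : b = v := congrArg Prod.snd hab
        exact hrtail b hmem (Or.inr (by rw [hbv]; rfl))
      · obtain ⟨b, hbY, hlb⟩ := hp.2.2.2
        exact ⟨b, hbY, by rw [← getLast?_of_suffix hrsuf hrne]; exact hlb⟩
    have sep_Sv : Sep ε X Y Sv := by
      intro p hp
      obtain ⟨r, hrsuf, -, ⟨s, hsSv, hshead⟩, -⟩ := key_right p hp
      exact ⟨s, hsSv, hrsuf.subset (mem_of_head?_eq hshead)⟩
    have sep_right : ∀ T : Set V, Sep ε' Sv Y T → k ≤ T.ncard := by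
      intro T hT
      apply h
      intro p hp
      obtain ⟨r, hrsuf, hr, -, -⟩ := key_right p hp
      obtain ⟨s, hsT, hsr⟩ := hT r hr
      exact ⟨s, hsT, hrsuf.subset hsr⟩
    -- cardinalities
    have hkSu : k ≤ Su.ncard := h Su sep_Su
    have hkSv : k ≤ Sv.ncard := h Sv sep_Sv
    have hSuub : Su.ncard ≤ S.ncard + 1 := by
      refine le_trans (Set.ncard_union_le _ _) ?_
      simp [Set.ncard_singleton]
    have hSvub : Sv.ncard ≤ S.ncard + 1 := by
      refine le_trans (Set.ncard_union_le _ _) ?_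
      simp [Set.ncard_singleton]
    have huS : u ∉ S := by
      intro hu
      have hSSu : Su = S := by
        rw [hSudef]
        exact Set.union_eq_self_of_subset_right (by simpa using hu)
      rw [hSSu] at hkSu
      omega
    have hvS : v ∉ S := by
      intro hv
      have hSSv : Sv = S := by
        rw [hSvdef]
        exact Set.union_eq_self_of_subset_right (by simpa using hv)
      rw [hSSv] at hkSv
      omega
    have hSucard : Su.ncard = k := le_antisymm (by omega) hkSu
    have hSvcard : Sv.ncard = k := le_antisymm (by omega) hkSv
    -- left path system
    obtain ⟨P₀, hP₀, hd₀⟩ := ih ε' hε'card X Su k sep_left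
    have htrim : ∀ i : Fin k, ∃ q, q <+: P₀ i ∧ q ≠ [] ∧
        (∃ s ∈ Su, q.getLast? = some s) ∧ ∀ x ∈ q.dropLast, x ∉ Su := by
      intro i
      obtain ⟨b, hb, hlb⟩ := (hP₀ i).2.2.2
      exact first_hit Su (P₀ i) ⟨b, hb, mem_of_getLast?_eq hlb⟩
    choose Q hQpre hQne hQl hQdrop using htrim
    choose li hliSu hlilast using hQl
    have hQPth : ∀ i, Pth ε' X Su (Q i) := by
      intro i
      refine ⟨(hP₀ i).1.sublist (hQpre i).sublist, (hP₀ i).2.1.prefix (hQpre i), ?_,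
        ⟨li i, hliSu i, hlilast i⟩⟩
      obtain ⟨a, haX, hha⟩ := (hP₀ i).2.2.1
      exact ⟨a, haX, by rw [← head?_of_prefix (hQpre i) (hQne i)]; exact hha⟩
    have hQdisj : ∀ i j, i ≠ j → ∀ x, x ∈ Q i → x ∉ Q j :=
      fun i j hij x hxi hxj =>
        hd₀ i j hij x ((hQpre i).subset hxi) ((hQpre j).subset hxj)
    have hli_mem : ∀ i, li i ∈ Q i := fun i => mem_of_getLast?_eq (hlilast i)
    have hli_inj : Function.Injective li := by
      intro i j hij
      by_contra hne'
      exact hQdisj i j hne' (li i) (hli_mem i) (hij ▸ hli_mem j)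
    have hli_surj : ∀ s ∈ Su, ∃ i, li i = s := by
      have hfin : Su.Finite := Set.toFinite _
      have hTcard : hfin.toFinset.card = k := by
        rw [← Set.ncard_eq_toFinset_card _ hfin]; exact hSucard
      set φ : Fin k → ↥hfin.toFinset := fun i => ⟨li i, hfin.mem_toFinset.2 (hliSu i)⟩ with hφdef
      have hφinj : Function.Injective φ := by
        intro i j hij
        exact hli_inj (congrArg Subtype.val hij)
      have hφbij : Function.Bijective φ :=
        (Fintype.bijective_iff_injective_and_card φ).2
          ⟨hφinj, by rw [Fintype.card_fin, Fintype.card_coe, hTcard]⟩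
      intro s hs
      obtain ⟨i, hi⟩ := hφbij.2 ⟨s, hfin.mem_toFinset.2 hs⟩
      exact ⟨i, congrArg Subtype.val hi⟩
    -- right path system
    obtain ⟨R₀, hR₀, hd₁⟩ := ih ε' hε'card Sv Y k sep_right
    have htrimR : ∀ i : Fin k, ∃ r, r <:+ R₀ i ∧ r ≠ [] ∧
        (∃ s ∈ Sv, r.head? = some s) ∧ ∀ x ∈ r.tail, x ∉ Sv := by
      intro i
      obtain ⟨a, ha, hha⟩ := (hR₀ i).2.2.1
      exact last_hit Sv (R₀ i) ⟨a, ha, mem_of_head?_eq hha⟩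
    choose Rt hRsuf hRne hRh hRtail using htrimR
    choose ri hriSv hrihead using hRh
    have hRPth : ∀ i, Pth ε' Sv Y (Rt i) := by
      intro i
      refine ⟨(hR₀ i).1.sublist (hRsuf i).sublist, (hR₀ i).2.1.suffix (hRsuf i),
        ⟨ri i, hriSv i, hrihead i⟩, ?_⟩
      obtain ⟨b, hbY, hlb⟩ := (hR₀ i).2.2.2
      exact ⟨b, hbY, by rw [← getLast?_of_suffix (hRsuf i) (hRne i)]; exact hlb⟩
    have hRdisj : ∀ i j, i ≠ j → ∀ x, x ∈ Rt i → x ∉ Rt j :=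
      fun i j hij x hxi hxj =>
        hd₁ i j hij x ((hRsuf i).subset hxi) ((hRsuf j).subset hxj)
    have hri_mem : ∀ i, ri i ∈ Rt i := fun i => mem_of_head?_eq (hrihead i)
    have hri_inj : Function.Injective ri := by
      intro i j hij
      by_contra hne'
      exact hRdisj i j hne' (ri i) (hri_mem i) (hij ▸ hri_mem j)
    have hri_surj : ∀ s ∈ Sv, ∃ i, ri i = s := by
      have hfin : Sv.Finite := Set.toFinite _
      have hTcard : hfin.toFinset.card = k := by
        rw [← Set.ncard_eq_toFinset_card _ hfin]; exact hSvcard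
      set φ : Fin k → ↥hfin.toFinset := fun i => ⟨ri i, hfin.mem_toFinset.2 (hriSv i)⟩ with hφdef
      have hφinj : Function.Injective φ := by
        intro i j hij
        exact hri_inj (congrArg Subtype.val hij)
      have hφbij : Function.Bijective φ :=
        (Fintype.bijective_iff_injective_and_card φ).2
          ⟨hφinj, by rw [Fintype.card_fin, Fintype.card_coe, hTcard]⟩
      intro s hs
      obtain ⟨i, hi⟩ := hφbij.2 ⟨s, hfin.mem_toFinset.2 hs⟩
      exact ⟨i, congrArg Subtype.val hi⟩
    -- the intersection claim
    have claim : ∀ i j x, x ∈ Q i → x ∈ Rt j →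
        x ∈ S ∧ (Q i).getLast? = some x ∧ (Rt j).head? = some x := by
      intro i j x hxQ hxR
      obtain ⟨q, hqpre, hqne, hql, -⟩ := first_hit {x} (Q i) ⟨x, rfl, hxQ⟩
      have hqlast : q.getLast? = some x := by
        rcases hql with ⟨s, hs, h'⟩
        rwa [Set.mem_singleton_iff.1 hs] at h'
      obtain ⟨r, hrsuf, hrhd⟩ := suffix_from_mem hxR
      have hrne : r ≠ [] := by intro h'; rw [h'] at hrhd; simp at hrhd
      have hqch : q.Chain' (fun a b => (a, b) ∈ ε') := (hQPth i).2.1.prefix hqpre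
      have hrch : r.Chain' (fun a b => (a, b) ∈ ε') := (hRPth j).2.1.suffix hrsuf
      obtain ⟨hwch, hwhd, hwlast⟩ := glue_path hqch hrch hqne hrne (by rw [hqlast, hrhd])
      have hwne : q ++ r.tail ≠ [] := by
        intro h'
        exact hqne (List.append_eq_nil_iff.1 h').1
      obtain ⟨w, hwne', hwnd, hwch', hwhd', hwlast', hwsub⟩ :=
        exists_nodup_path (q ++ r.tail) hwch hwne
      have hwPth : Pth ε' X Y w := by
        refine ⟨hwnd, hwch', ?_, ?_⟩
        · obtain ⟨a, haX, hha⟩ := (hQPth i).2.2.1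
          exact ⟨a, haX, by
            rw [hwhd', hwhd, ← head?_of_prefix hqpre hqne]; exact hha⟩
        · obtain ⟨b, hbY, hlb⟩ := (hRPth j).2.2.2
          exact ⟨b, hbY, by
            rw [hwlast', hwlast, ← getLast?_of_suffix hrsuf hrne]; exact hlb⟩
      obtain ⟨s₀, hs₀S, hs₀w⟩ := hS w hwPth
      have hs₀qr : s₀ ∈ q ∨ s₀ ∈ r.tail := List.mem_append.1 (hwsub s₀ hs₀w)
      have hmain : x ∈ S ∧ x = li i ∧ x = ri j := by
        rcases hs₀qr with hs₀q | hs₀rt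
        · have hs₀Qi : s₀ ∈ Q i := hqpre.subset hs₀q
          have hgl : (Q i).getLast? = some s₀ := by
            rcases mem_dropLast_or_getLast? hs₀Qi with h' | h'
            · exact absurd (Or.inl hs₀S : s₀ ∈ Su) (hQdrop i s₀ h')
            · exact h'
          have hs₀li : li i = s₀ := Option.some_inj.1 ((hlilast i).symm.trans hgl)
          have hqQ : q = Q i :=
            eq_of_prefix_getLast_mem (hQPth i).1 hqpre (hlilast i) (hs₀li ▸ hs₀q)
          have hxli : x = li i := by
            have h'' : (Q i).getLast? = some x := hqQ ▸ hqlast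
            exact (Option.some_inj.1 ((hlilast i).symm.trans h'')).symm
          have hxinS : x ∈ S := by rw [hxli, hs₀li]; exact hs₀S
          have hxri : x = ri j := by
            rcases head?_eq_or_mem_tail hxR with h' | h'
            · exact (Option.some_inj.1 ((hrihead j).symm.trans h')).symm
            · exact absurd (Or.inl hxinS : x ∈ Sv) (hRtail j x h')
          exact ⟨hxinS, hxli, hxri⟩
        · have hs₀Rt : s₀ ∈ Rt j := hrsuf.subset (List.tail_subset _ hs₀rt)
          have hhd : (Rt j).head? = some s₀ := by
            rcases head?_eq_or_mem_tail hs₀Rt with h' | h'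
            · exact h'
            · exact absurd (Or.inl hs₀S : s₀ ∈ Sv) (hRtail j s₀ h')
          have hs₀ri : ri j = s₀ := Option.some_inj.1 ((hrihead j).symm.trans hhd)
          have hrR : r = Rt j :=
            eq_of_suffix_head_mem (hRPth j).1 hrsuf (hrihead j)
              (hs₀ri ▸ (List.tail_subset _ hs₀rt))
          have hxri : x = ri j := by
            have h'' : (Rt j).head? = some x := hrR ▸ hrhd
            exact (Option.some_inj.1 ((hrihead j).symm.trans h'')).symm
          have hxinS : x ∈ S := by rw [hxri, hs₀ri]; exact hs₀S
          have hxli : x = li i := by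
            rcases mem_dropLast_or_getLast? hxQ with h' | h'
            · exact absurd (Or.inl hxinS : x ∈ Su) (hQdrop i x h')
            · exact (Option.some_inj.1 ((hlilast i).symm.trans h')).symm
          exact ⟨hxinS, hxli, hxri⟩
      exact ⟨hmain.1, by rw [hmain.2.1]; exact hlilast i, by rw [hmain.2.2]; exact hrihead j⟩
    -- partner function
    have hpick : ∀ i : Fin k, ∃ j, (li i ∈ S ∧ ri j = li i) ∨ (li i = u ∧ ri j = v) := by
      intro i
      rcases hliSu i with hs | hu'
      · obtain ⟨j, hj⟩ := hri_surj (li i) (Or.inl hs)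
        exact ⟨j, Or.inl ⟨hs, hj⟩⟩
      · obtain ⟨j, hj⟩ := hri_surj v (Or.inr rfl)
        exact ⟨j, Or.inr ⟨hu', hj⟩⟩
    choose τ hτ using hpick
    have hτS : ∀ i, li i ∈ S → ri (τ i) = li i := by
      intro i hs
      rcases hτ i with ⟨-, h'⟩ | ⟨h1, -⟩
      · exact h'
      · exact absurd (h1 ▸ hs) huS
    have hτu : ∀ i, li i ∉ S → li i = u ∧ ri (τ i) = v := by
      intro i hs
      rcases hτ i with ⟨h1, -⟩ | h'
      · exact absurd h1 hs
      · exact h'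
    have hτinj : Function.Injective τ := by
      intro i j hij
      by_cases hiS : li i ∈ S <;> by_cases hjS : li j ∈ S
      · apply hli_inj
        rw [← hτS i hiS, ← hτS j hjS, hij]
      · exfalso
        have h1 := hτS i hiS
        have h2 := (hτu j hjS).2
        have : li i = v := by rw [← h1, hij, h2]
        exact hvS (this ▸ hiS)
      · exfalso
        have h1 := hτS j hjS
        have h2 := (hτu i hiS).2
        have : li j = v := by rw [← h1, ← hij, h2]
        exact hvS (this ▸ hjS)
      · apply hli_inj
        rw [(hτu i hiS).1, (hτu j hjS).1]
    -- the final paths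
    have hchainQ : ∀ i, (Q i).Chain' (fun a b => (a, b) ∈ ε) :=
      fun i => (hQPth i).2.1.imp (fun _ _ h' => hε'sub h')
    have hchainR : ∀ i, (Rt i).Chain' (fun a b => (a, b) ∈ ε) :=
      fun i => (hRPth i).2.1.imp (fun _ _ h' => hε'sub h')
    refine ⟨fun i => if li i ∈ S then Q i ++ (Rt (τ i)).tail else Q i ++ Rt (τ i), ?_, ?_⟩
    · intro i
      show Pth ε X Y (if li i ∈ S then Q i ++ (Rt (τ i)).tail else Q i ++ Rt (τ i))
      by_cases hs : li i ∈ S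
      · rw [if_pos hs]
        have hlink : (Q i).getLast? = (Rt (τ i)).head? := by
          rw [hlilast i, hrihead (τ i), hτS i hs]
        obtain ⟨hgch, hghd, hglast⟩ :=
          glue_path (hchainQ i) (hchainR (τ i)) (hQne i) (hRne (τ i)) hlink
        refine ⟨?_, hgch, ?_, ?_⟩
        · rw [List.nodup_append]
          refine ⟨(hQPth i).1, (hRPth (τ i)).1.sublist (List.tail_sublist _), ?_⟩
          rintro x hxQ _ hxRt rfl
          have hxR : x ∈ Rt (τ i) := List.tail_subset _ hxRt
          obtain ⟨-, -, hhd⟩ := claim i (τ i) x hxQ hxR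
          exact head?_not_mem_tail (hRPth (τ i)).1 hhd hxRt
        · obtain ⟨a, haX, hha⟩ := (hQPth i).2.2.1
          exact ⟨a, haX, by rw [hghd]; exact hha⟩
        · obtain ⟨b, hbY, hlb⟩ := (hRPth (τ i)).2.2.2
          exact ⟨b, hbY, by rw [hglast]; exact hlb⟩
      · rw [if_neg hs]
        have hu' := hτu i hs
        have hdisjQR : ∀ x ∈ Q i, x ∉ Rt (τ i) := by
          intro x hxQ hxR
          obtain ⟨hxS, hxl, -⟩ := claim i (τ i) x hxQ hxR
          have hxli : li i = x := Option.some_inj.1 ((hlilast i).symm.trans hxl)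
          rw [← hxli, hu'.1] at hxS
          exact huS hxS
        refine ⟨?_, ?_, ?_, ?_⟩
        · rw [List.nodup_append]
          exact ⟨(hQPth i).1, (hRPth (τ i)).1, fun x hx y hy hxy => hdisjQR x hx (hxy ▸ hy)⟩
        · rw [List.Chain', List.isChain_append]
          refine ⟨hchainQ i, hchainR (τ i), ?_⟩
          intro x hx y hy
          rw [Option.mem_def] at hx hy
          have hxu : x = u := by
            have h1 : li i = x := Option.some_inj.1 ((hlilast i).symm.trans hx)
            rw [← h1, hu'.1]
          have hyv : y = v := by
            have h1 : ri (τ i) = y := Option.some_inj.1 ((hrihead (τ i)).symm.trans hy)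
            rw [← h1, hu'.2]
          rw [hxu, hyv]
          exact he
        · obtain ⟨a, haX, hha⟩ := (hQPth i).2.2.1
          exact ⟨a, haX, by rw [head?_append_of_ne_nil' (hQne i)]; exact hha⟩
        · obtain ⟨b, hbY, hlb⟩ := (hRPth (τ i)).2.2.2
          exact ⟨b, hbY, by
            rw [List.getLast?_append_of_ne_nil _ (hRne (τ i))]; exact hlb⟩
    · intro i j hij x hxi hxj
      replace hxi : x ∈ (if li i ∈ S then Q i ++ (Rt (τ i)).tail else Q i ++ Rt (τ i)) := hxi
      replace hxj : x ∈ (if li j ∈ S then Q j ++ (Rt (τ j)).tail else Q j ++ Rt (τ j)) := hxj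
      have hmemsplit : ∀ m : Fin k, x ∈ (if li m ∈ S then Q m ++ (Rt (τ m)).tail
          else Q m ++ Rt (τ m)) → x ∈ Q m ∨ x ∈ Rt (τ m) := by
        intro m hx
        by_cases hs : li m ∈ S
        · rw [if_pos hs] at hx
          rcases List.mem_append.1 hx with h' | h'
          · exact Or.inl h'
          · exact Or.inr (List.tail_subset _ h')
        · rw [if_neg hs] at hx
          exact List.mem_append.1 hx
      have hxi' := hmemsplit i hxi
      have hxj' := hmemsplit j hxj
      have hcross : ∀ a b : Fin k, a ≠ b → x ∈ Q a → x ∈ Rt (τ b) → False := by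
        intro a b hab hQa hRb
        obtain ⟨hxS, hxl, hxh⟩ := claim a (τ b) x hQa hRb
        have hxla : li a = x := Option.some_inj.1 ((hlilast a).symm.trans hxl)
        have hxrb : ri (τ b) = x := Option.some_inj.1 ((hrihead (τ b)).symm.trans hxh)
        by_cases hbS : li b ∈ S
        · have h1 : li b = x := by rw [← hτS b hbS, hxrb]
          exact hab (hli_inj (hxla.trans h1.symm))
        · have h2 := (hτu b hbS).2
          rw [h2] at hxrb
          exact hvS (hxrb ▸ hxS)
      rcases hxi' with hQi | hRi <;> rcases hxj' with hQj | hRj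
      · exact hQdisj i j hij x hQi hQj
      · exact hcross i j hij hQi hRj
      · exact hcross j i (Ne.symm hij) hQj hRi
      · have hτij : τ i ≠ τ j := fun h' => hij (hτinj h')
        exact hRdisj (τ i) (τ j) hτij x hRi hRj

end MAux

open MAux

/-- If `B` does not (f+1)-propagate to `A − F` avoiding `F`, then there is a partition
`(A', B')` refining `(A, B)` with the in-neighborhood of `A' − F` inside `B'` of size ≤ f. -/
theorem B_does_not_propagate_A [Fintype V] (E : V → V → Prop) (f : ℕ) (F A B : Set V)
    (hF : F.ncard ≤ f)
    (hpart : A ∪ B = Set.univ) (hdisj : A ∩ B = ∅)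
    (hA : (A \ F).Nonempty) (hB : (B \ F).Nonempty)
    (hnp : ¬ Propagates E f F B (A \ F)) :
    ∃ A' B' : Set V, A' ∪ B' = Set.univ ∧ A' ∩ B' = ∅ ∧
      A' ⊆ A ∧ B ⊆ B' ∧ (A' \ F).Nonempty ∧ (B' \ F).Nonempty ∧
      (inNbr E B' (A' \ F)).ncard ≤ f := by
  classical
  simp only [Propagates] at hnp
  push_neg at hnp
  obtain ⟨t, htAF, hnd⟩ := hnp
  have htF : t ∉ F := htAF.2
  have htB : t ∉ B := by
    intro hb
    have ht2 : t ∈ A ∩ B := ⟨htAF.1, hb⟩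
    rw [hdisj] at ht2
    exact ht2
  set ρ : V → V → Prop := fun a b => a ≠ t ∧ b ≠ t ∧ b ∉ F ∧ E a b with hρdef
  set ε : Finset (V × V) := (Set.toFinite {p : V × V | ρ p.1 p.2}).toFinset with hεdef
  have hεmem : ∀ a b : V, (a, b) ∈ ε ↔ ρ a b := by
    intro a b
    rw [hεdef, Set.Finite.mem_toFinset]
    rfl
  set Yt : Set V := {w | w ≠ t ∧ E w t} with hYdef
  have hvert : ∀ p : List V, p.Chain' (fun a b => (a, b) ∈ ε) →
      ∀ x ∈ p.tail, x ≠ t ∧ x ∉ F := by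
    intro p hch x hx
    obtain ⟨a, ha⟩ := mem_tail_edges hx
    have h' := (hεmem a x).1 (chain'_iff_edges.1 hch _ ha)
    exact ⟨h'.2.1, h'.2.2.1⟩
  have hvert' : ∀ p, Pth ε B Yt p → ∀ x ∈ p, x ≠ t := by
    intro p hp x hx
    rcases head?_eq_or_mem_tail hx with h' | h'
    · obtain ⟨a, haB, hha⟩ := hp.2.2.1
      have hax : a = x := Option.some_inj.1 (hha.symm.trans h')
      rintro rfl
      exact htB (hax ▸ haB)
    · exact (hvert p hp.2.1 x h').1
  have hno : ¬ (∀ S : Set V, Sep ε B Yt S → f + 1 ≤ S.ncard) := by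
    intro hsep
    obtain ⟨P, hP, hd⟩ := menger (ε.card) ε le_rfl B Yt (f + 1) hsep
    apply hnd
    refine ⟨fun i => P i ++ [t], fun i => ?_, ?_⟩
    · have hPne := (hP i).ne_nil
      have htP : t ∉ P i := fun ht' => hvert' _ (hP i) t ht' rfl
      obtain ⟨a, haB, hha⟩ := (hP i).2.2.1
      obtain ⟨b, hbY, hlb⟩ := (hP i).2.2.2
      constructor
      · refine ⟨⟨by simp, ?_, ?_⟩, ⟨a, haB, ?_⟩, ?_⟩
        · rw [List.nodup_append]
          exact ⟨(hP i).1, List.nodup_singleton _,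
            fun x hx _ hx' hxy => (hvert' _ (hP i) x hx) (hxy.trans (List.mem_singleton.1 hx'))⟩
        · rw [List.Chain', List.isChain_append]
          refine ⟨(hP i).2.1.imp ?_, List.isChain_singleton _, ?_⟩
          · intro a' b' hab
            exact ((hεmem a' b').1 hab).2.2.2
          · intro x hx y hy
            rw [Option.mem_def] at hx hy
            have hxb : b = x := Option.some_inj.1 (hlb.symm.trans hx)
            have hyt : t = y := by simpa using hy
            rw [← hxb, ← hyt]
            exact hbY.2
        · rw [head?_append_of_ne_nil' hPne]
          exact hha
        · rw [List.getLast?_append_of_ne_nil _ (by simp : ([t] : List V) ≠ [])]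
          simp
      · intro x hx
        replace hx : x ∈ (P i ++ [t]).tail.dropLast := hx
        cases hPi : P i with
        | nil => exact absurd hPi hPne
        | cons a₀ rest =>
          rw [hPi] at hx
          simp only [List.cons_append, List.tail_cons, List.dropLast_concat] at hx
          exact (hvert (P i) (hP i).2.1 x (by rw [hPi]; exact hx)).2
    · intro i j hij x hxi hxj
      rcases List.mem_append.1 hxi with h1 | h1
      · rcases List.mem_append.1 hxj with h2 | h2
        · exact absurd h2 (hd i j hij x h1)
        · exact List.mem_singleton.1 h2
      · exact List.mem_singleton.1 h1
  push_neg at hno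
  obtain ⟨S₀, hS₀sep, hS₀card⟩ := hno
  set S : Set V := S₀ \ {t} with hSdef
  have hSsep : Sep ε B Yt S := by
    intro p hp
    obtain ⟨s, hsS₀, hsp⟩ := hS₀sep p hp
    exact ⟨s, ⟨hsS₀, by simpa using hvert' p hp s hsp⟩, hsp⟩
  have hScard : S.ncard ≤ f := by
    have h1 : S.ncard ≤ S₀.ncard := Set.ncard_le_ncard Set.diff_subset (Set.toFinite _)
    omega
  have htS : t ∉ S := fun h' => h'.2 rfl
  set σ : V → V → Prop := fun a b => a ∉ S ∧ b ∉ S ∧ ρ a b with hσdef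
  set A' : Set V :=
    {x | x ∉ S ∧ (x = t ∨ ∃ w, w ∈ Yt ∧ w ∉ S ∧ Relation.ReflTransGen σ x w)} with hA'def
  have htA' : t ∈ A' := ⟨htS, Or.inl rfl⟩
  have hA'B : ∀ b ∈ B, b ∉ A' := by
    rintro b hb ⟨hbS, hor⟩
    rcases hor with rfl | ⟨w, hwY, hwS, hreach⟩
    · exact htB hb
    · obtain ⟨l, hchain, hlast⟩ := List.exists_isChain_cons_of_relationReflTransGen hreach
      have hch' : (b :: l).Chain' σ := hchain
      have hlast' : (b :: l).getLast? = some w := by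
        rw [List.getLast?_eq_getLast (l := b :: l) (by simp)]
        exact congrArg some hlast
      obtain ⟨p₁, hne, hnd₁, hch₁, hh₁, hl₁, hsub₁⟩ :=
        exists_nodup_path (b :: l) hch' (by simp)
      have hp₁ : Pth ε B Yt p₁ := by
        refine ⟨hnd₁, hch₁.imp ?_, ⟨b, hb, by rw [hh₁]; rfl⟩,
          ⟨w, hwY, by rw [hl₁, hlast']⟩⟩
        intro a' b' hab
        exact (hεmem a' b').2 hab.2.2
      obtain ⟨s, hsS, hsp⟩ := hSsep p₁ hp₁
      rcases List.mem_cons.1 (hsub₁ s hsp) with rfl | hsl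
      · exact hbS hsS
      · obtain ⟨a', ha'⟩ := mem_tail_edges (show s ∈ (b :: l).tail from hsl)
        exact (chain'_iff_edges.1 hch' _ ha').2.1 hsS
  refine ⟨A', A'ᶜ, Set.union_compl_self _, Set.inter_compl_self _, ?_, ?_,
    ⟨t, htA', htF⟩, ?_, ?_⟩
  · intro x hx
    have hxB : x ∉ B := fun hb => hA'B x hb hx
    have hxu : x ∈ A ∪ B := hpart ▸ Set.mem_univ x
    rcases hxu with h' | h'
    · exact h'
    · exact absurd h' hxB
  · intro b hb
    exact hA'B b hb
  · obtain ⟨b, hbB, hbF⟩ := hB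
    exact ⟨b, hA'B b hbB, hbF⟩
  · have hsub : inNbr E A'ᶜ (A' \ F) ⊆ S := by
      rintro u' ⟨hu'B, x, hxAF, hE⟩
      by_contra hu'S
      apply hu'B
      have hu't : u' ≠ t := fun h' => hu'B (h' ▸ htA')
      by_cases hxt : x = t
      · exact ⟨hu'S, Or.inr ⟨u', ⟨hu't, hxt ▸ hE⟩, hu'S, Relation.ReflTransGen.refl⟩⟩
      · obtain ⟨hxS, hor⟩ := hxAF.1
        rcases hor with h' | ⟨w, hwY, hwS, hreach⟩
        · exact absurd h' hxt
        · exact ⟨hu'S, Or.inr ⟨w, hwY, hwS,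
            Relation.ReflTransGen.head ⟨hu'S, hxS, hu't, hxt, hxAF.2, hE⟩ hreach⟩⟩
    calc (inNbr E A'ᶜ (A' \ F)).ncard ≤ S.ncard :=
          Set.ncard_le_ncard hsub (Set.toFinite _)
      _ ≤ f := hScard
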